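/- arXiv:1809.02196 — 4 statements merged into one kernel-verified Lean document; each statement's English description precedes it below -/
import Mathlib

section
/- Let K : ℝ → ℝ be even, bounded, continuous and Lebesgue integrable, with integrable Fourier transform 𝒦(ξ) = ∫_ℝ K(t) e^{−2πiξt} dt, and let α > 0. Then for all ξ, ξ' ∈ ℝ, the double integral ∬_{ℝ×ℝ} K(t−t') e^{−α t²} e^{−α t'²} e^{−2πi(ξ t − ξ' t')} dt dt' equals √(π/(2α)) · e^{−π²(ξ−ξ')²/(2α)} · ∫_ℝ 𝒦((ξ+ξ')/2 − u) · √(2π/α) e^{−2π² u²/α} du. (Proposition 1: covariance of the local spectrum of a stationary Gaussian process.) -/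
open MeasureTheory Real Complex FourierTransform
open scoped Real

private lemma normExpAux (x y : ℝ) : ‖Complex.exp (((x:ℝ):ℂ) + ((y:ℝ):ℂ) * Complex.I)‖ = Real.exp x := by
  rw [Complex.norm_exp]
  simp

private lemma gauss_step {b : ℝ} (hb : 0 < b) (c r s : ℝ) :
    (∫ x : ℝ, Complex.exp (((-b * x ^ 2 + r : ℝ) : ℂ) + ((c * x + s : ℝ) : ℂ) * Complex.I))
      = (Real.sqrt (π / b) : ℂ) *
        Complex.exp (((-c ^ 2 / (4 * b) + r : ℝ) : ℂ) + (s : ℂ) * Complex.I) := by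
  have hbne : (b : ℂ) ≠ 0 := by exact_mod_cast hb.ne'
  have h1 : ∀ x : ℝ, (((-b * x ^ 2 + r : ℝ) : ℂ) + ((c * x + s : ℝ) : ℂ) * Complex.I)
      = (-(b:ℂ)) * x ^ 2 + ((c:ℂ) * Complex.I) * x + (↑r + ↑s * Complex.I) := by
    intro x; push_cast; ring
  simp_rw [h1]
  rw [integral_cexp_quadratic (by simpa using hb) ((c:ℂ) * Complex.I) (↑r + ↑s * Complex.I)]
  congr 1
  · rw [neg_neg]
    rw [show ((π:ℂ) / (b:ℂ)) = ((π / b : ℝ) : ℂ) by push_cast; ring]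
    rw [show ((1:ℂ)/2) = (((1:ℝ)/2 : ℝ) : ℂ) by norm_num]
    rw [← Complex.ofReal_cpow (by positivity), ← Real.sqrt_eq_rpow]
  · congr 1
    field_simp
    ring_nf
    simp [Complex.I_sq]
    ring
    field_simp

private lemma mulExpAux (z a b c d : ℂ) :
    Complex.exp a * z * Complex.exp b * Complex.exp c * Complex.exp d
      = z * Complex.exp (a + b + c + d) := by
  rw [Complex.exp_add, Complex.exp_add, Complex.exp_add]; ring

private lemma integral_comp_sub_left' (g : ℝ → ℂ) (a : ℝ) :
    ∫ x : ℝ, g (a - x) = ∫ x : ℝ, g x := by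
  have h1 : ∫ x : ℝ, g (a - x) = ∫ x : ℝ, g (a + x) := by
    simp_rw [sub_eq_add_neg]
    exact integral_neg_eq_self (fun y : ℝ => g (a + y)) volume
  rw [h1]
  exact integral_add_left_eq_self (μ := volume) g a

/-- Proposition 1: the covariance of the local spectrum of a stationary Gaussian
process with kernel `K` and window `e^{-α t²}` equals a Gaussian-smoothed version of
the Fourier transform `𝒦` of `K`, evaluated at the mid-frequency `(ξ+ξ')/2`. -/
theorem local_spectrum_covariance
    (K : ℝ → ℝ) (𝒦 : ℝ → ℂ)
    (hEven : ∀ t, K (-t) = K t)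
    (hBdd : ∃ M, ∀ t, |K t| ≤ M)
    (hCont : Continuous K)
    (hInt : Integrable K)
    (h𝒦 : ∀ ξ : ℝ, 𝒦 ξ = ∫ t : ℝ, (K t : ℂ) *
      Complex.exp (-2 * Real.pi * Complex.I * ξ * t))
    (h𝒦Int : Integrable 𝒦)
    (α : ℝ) (hα : 0 < α) (ξ ξ' : ℝ) :
    (∫ t : ℝ, ∫ t' : ℝ, (K (t - t') : ℂ) * Real.exp (-α * t ^ 2) *
        Real.exp (-α * t' ^ 2) *
        Complex.exp (-2 * Real.pi * Complex.I * (ξ * t - ξ' * t')))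
    = (Real.sqrt (Real.pi / (2 * α)) : ℂ) *
        Real.exp (-Real.pi ^ 2 * (ξ - ξ') ^ 2 / (2 * α)) *
      ∫ u : ℝ, 𝒦 ((ξ + ξ') / 2 - u) *
        (Real.sqrt (2 * Real.pi / α) * Real.exp (-2 * Real.pi ^ 2 * u ^ 2 / α)) := by
  have hπ := Real.pi_pos
  -- Fourier inversion for K
  have hKint : Integrable (fun t : ℝ => (K t : ℂ)) := hInt.ofReal
  have hKcont : Continuous (fun t : ℝ => (K t : ℂ)) := Complex.continuous_ofReal.comp hCont
  have hf𝓕 : 𝓕 (fun t : ℝ => (K t : ℂ)) = 𝒦 := by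
    funext w
    rw [Real.fourier_real_eq_integral_exp_smul, h𝒦 w]
    refine integral_congr_ae (Filter.Eventually.of_forall fun v => ?_)
    simp only [smul_eq_mul]
    rw [mul_comm]
    congr 1
    push_cast; ring
  have hinv0 : 𝓕⁻ 𝒦 = fun t : ℝ => (K t : ℂ) := by
    rw [← hf𝓕]
    exact hKcont.fourierInv_fourier_eq hKint (hf𝓕 ▸ h𝒦Int)
  have hinv : ∀ x : ℝ, (K x : ℂ)
      = ∫ u : ℝ, Complex.exp (((2 * π * (u * x) : ℝ) : ℂ) * Complex.I) * 𝒦 u := by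
    intro x
    have h2 : 𝓕⁻ 𝒦 x
        = ∫ u : ℝ, Complex.exp (((2 * π * (u * x) : ℝ) : ℂ) * Complex.I) * 𝒦 u := by
      rw [Real.fourierInv_eq_fourier_neg,
        Real.fourier_real_eq_integral_exp_smul]
      refine integral_congr_ae (Filter.Eventually.of_forall fun v => ?_)
      simp only [smul_eq_mul]
      congr 2
      push_cast; ring
    rw [← h2, hinv0]
  -- Step 1 : insert the inversion formula
  have step1 : (∫ t : ℝ, ∫ t' : ℝ, (K (t - t') : ℂ) * Real.exp (-α * t ^ 2) *
        Real.exp (-α * t' ^ 2) *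
        Complex.exp (-2 * Real.pi * Complex.I * (ξ * t - ξ' * t')))
      = ∫ t : ℝ, ∫ t' : ℝ, ∫ u : ℝ, 𝒦 u *
          Complex.exp (((-α * t' ^ 2 + -α * t ^ 2 : ℝ) : ℂ)
            + ((2 * π * (ξ' - u) * t' + 2 * π * ((u - ξ) * t) : ℝ) : ℂ) * Complex.I) := by
    refine integral_congr_ae (Filter.Eventually.of_forall fun t => ?_)
    refine integral_congr_ae (Filter.Eventually.of_forall fun t' => ?_)
    beta_reduce
    rw [hinv (t - t')]
    rw [← integral_mul_const, ← integral_mul_const, ← integral_mul_const]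
    refine integral_congr_ae (Filter.Eventually.of_forall fun u => ?_)
    beta_reduce
    rw [Complex.ofReal_exp, Complex.ofReal_exp, mulExpAux]
    congr 1
    push_cast; ring
  rw [step1]
  -- Step 2 : swap the t'- and u-integrals and do the Gaussian integral in t'
  have step2 : ∀ t : ℝ, (∫ t' : ℝ, ∫ u : ℝ, 𝒦 u *
          Complex.exp (((-α * t' ^ 2 + -α * t ^ 2 : ℝ) : ℂ)
            + ((2 * π * (ξ' - u) * t' + 2 * π * ((u - ξ) * t) : ℝ) : ℂ) * Complex.I))
      = ∫ u : ℝ, 𝒦 u * ((Real.sqrt (π / α) : ℂ) *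
          Complex.exp (((-(2 * π * (ξ' - u)) ^ 2 / (4 * α) + -α * t ^ 2 : ℝ) : ℂ)
            + ((2 * π * ((u - ξ) * t) : ℝ) : ℂ) * Complex.I)) := by
    intro t
    have hswap : Integrable (Function.uncurry fun t' u : ℝ => 𝒦 u *
        Complex.exp (((-α * t' ^ 2 + -α * t ^ 2 : ℝ) : ℂ)
          + ((2 * π * (ξ' - u) * t' + 2 * π * ((u - ξ) * t) : ℝ) : ℂ) * Complex.I))
        (volume.prod volume) := by
      have hmeas : AEStronglyMeasurable (Function.uncurry fun t' u : ℝ => 𝒦 u *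
          Complex.exp (((-α * t' ^ 2 + -α * t ^ 2 : ℝ) : ℂ)
            + ((2 * π * (ξ' - u) * t' + 2 * π * ((u - ξ) * t) : ℝ) : ℂ) * Complex.I))
          (volume.prod volume) :=
        (h𝒦Int.aestronglyMeasurable.comp_snd).mul
          ((Complex.continuous_exp.comp (by fun_prop : Continuous (fun p : ℝ × ℝ =>
            (((-α * p.1 ^ 2 + -α * t ^ 2 : ℝ) : ℂ)
              + ((2 * π * (ξ' - p.2) * p.1 + 2 * π * ((p.2 - ξ) * t) : ℝ) : ℂ) * Complex.I)))).aestronglyMeasurable)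
      refine Integrable.mono'
        (((integrable_exp_neg_mul_sq hα).mul_prod h𝒦Int.norm).const_mul (Real.exp (-α * t ^ 2)))
        hmeas (Filter.Eventually.of_forall fun p => ?_)
      calc ‖𝒦 p.2 * Complex.exp (((-α * p.1 ^ 2 + -α * t ^ 2 : ℝ) : ℂ)
            + ((2 * π * (ξ' - p.2) * p.1 + 2 * π * ((p.2 - ξ) * t) : ℝ) : ℂ) * Complex.I)‖
          = ‖𝒦 p.2‖ * Real.exp (-α * p.1 ^ 2 + -α * t ^ 2) := by rw [norm_mul, normExpAux]
        _ = Real.exp (-α * t ^ 2) * (Real.exp (-α * p.1 ^ 2) * ‖𝒦 p.2‖) := by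
            rw [Real.exp_add]; ring
        _ ≤ Real.exp (-α * t ^ 2) * (Real.exp (-α * p.1 ^ 2) * ‖𝒦 p.2‖) := le_rfl
    rw [integral_integral_swap hswap]
    refine integral_congr_ae (Filter.Eventually.of_forall fun u => ?_)
    beta_reduce
    rw [integral_const_mul, gauss_step hα (2 * π * (ξ' - u)) (-α * t ^ 2) (2 * π * ((u - ξ) * t))]
  calc (∫ t : ℝ, ∫ t' : ℝ, ∫ u : ℝ, 𝒦 u *
          Complex.exp (((-α * t' ^ 2 + -α * t ^ 2 : ℝ) : ℂ)
            + ((2 * π * (ξ' - u) * t' + 2 * π * ((u - ξ) * t) : ℝ) : ℂ) * Complex.I))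
      = ∫ t : ℝ, ∫ u : ℝ, 𝒦 u * ((Real.sqrt (π / α) : ℂ) *
          Complex.exp (((-(2 * π * (ξ' - u)) ^ 2 / (4 * α) + -α * t ^ 2 : ℝ) : ℂ)
            + ((2 * π * ((u - ξ) * t) : ℝ) : ℂ) * Complex.I)) := by
        exact integral_congr_ae (Filter.Eventually.of_forall fun t => step2 t)
    _ = ∫ u : ℝ, (𝒦 u * (Real.sqrt (π / α) : ℂ)) * ((Real.sqrt (π / α) : ℂ) *
          Complex.exp (((-(2 * π * (u - ξ)) ^ 2 / (4 * α)
              + -(2 * π * (ξ' - u)) ^ 2 / (4 * α) : ℝ) : ℂ)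
            + ((0 : ℝ) : ℂ) * Complex.I)) := by
        have hswap2 : Integrable (Function.uncurry fun t u : ℝ => 𝒦 u *
            ((Real.sqrt (π / α) : ℂ) *
            Complex.exp (((-(2 * π * (ξ' - u)) ^ 2 / (4 * α) + -α * t ^ 2 : ℝ) : ℂ)
              + ((2 * π * ((u - ξ) * t) : ℝ) : ℂ) * Complex.I))) (volume.prod volume) := by
          have hmeas : AEStronglyMeasurable (Function.uncurry fun t u : ℝ => 𝒦 u *
              ((Real.sqrt (π / α) : ℂ) *
              Complex.exp (((-(2 * π * (ξ' - u)) ^ 2 / (4 * α) + -α * t ^ 2 : ℝ) : ℂ)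
                + ((2 * π * ((u - ξ) * t) : ℝ) : ℂ) * Complex.I))) (volume.prod volume) :=
            (h𝒦Int.aestronglyMeasurable.comp_snd).mul
              ((continuous_const.mul (Complex.continuous_exp.comp (by fun_prop : Continuous (fun p : ℝ × ℝ =>
                (((-(2 * π * (ξ' - p.2)) ^ 2 / (4 * α) + -α * p.1 ^ 2 : ℝ) : ℂ)
                  + ((2 * π * ((p.2 - ξ) * p.1) : ℝ) : ℂ) * Complex.I))))).aestronglyMeasurable)
          refine Integrable.mono'
            (((integrable_exp_neg_mul_sq hα).mul_prod h𝒦Int.norm).const_mul (Real.sqrt (π / α)))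
            hmeas (Filter.Eventually.of_forall fun p => ?_)
          have hA : -(2 * π * (ξ' - p.2)) ^ 2 / (4 * α) ≤ 0 :=
            div_nonpos_of_nonpos_of_nonneg (neg_nonpos.mpr (sq_nonneg _)) (by positivity)
          calc ‖𝒦 p.2 * ((Real.sqrt (π / α) : ℂ) *
              Complex.exp (((-(2 * π * (ξ' - p.2)) ^ 2 / (4 * α) + -α * p.1 ^ 2 : ℝ) : ℂ)
                + ((2 * π * ((p.2 - ξ) * p.1) : ℝ) : ℂ) * Complex.I))‖
              = Real.sqrt (π / α) * (Real.exp (-(2 * π * (ξ' - p.2)) ^ 2 / (4 * α)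
                  + -α * p.1 ^ 2) * ‖𝒦 p.2‖) := by
                rw [norm_mul, norm_mul, normExpAux, Complex.norm_real,
                  Real.norm_of_nonneg (Real.sqrt_nonneg _)]
                ring
            _ ≤ Real.sqrt (π / α) * (Real.exp (-α * p.1 ^ 2) * ‖𝒦 p.2‖) := by
                have h := Real.exp_le_exp.2 (show -(2 * π * (ξ' - p.2)) ^ 2 / (4 * α)
                  + -α * p.1 ^ 2 ≤ -α * p.1 ^ 2 by linarith)
                exact mul_le_mul_of_nonneg_left
                  (mul_le_mul_of_nonneg_right h (norm_nonneg _)) (Real.sqrt_nonneg _)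
        rw [integral_integral_swap hswap2]
        refine integral_congr_ae (Filter.Eventually.of_forall fun u => ?_)
        beta_reduce
        have hre : ∀ t : ℝ, 𝒦 u * ((Real.sqrt (π / α) : ℂ) *
            Complex.exp (((-(2 * π * (ξ' - u)) ^ 2 / (4 * α) + -α * t ^ 2 : ℝ) : ℂ)
              + ((2 * π * ((u - ξ) * t) : ℝ) : ℂ) * Complex.I))
            = (𝒦 u * (Real.sqrt (π / α) : ℂ)) *
              Complex.exp (((-α * t ^ 2 + -(2 * π * (ξ' - u)) ^ 2 / (4 * α) : ℝ) : ℂ)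
                + ((2 * π * (u - ξ) * t + 0 : ℝ) : ℂ) * Complex.I) := by
          intro t
          rw [show (((-(2 * π * (ξ' - u)) ^ 2 / (4 * α) + -α * t ^ 2 : ℝ) : ℂ)
              + ((2 * π * ((u - ξ) * t) : ℝ) : ℂ) * Complex.I)
            = (((-α * t ^ 2 + -(2 * π * (ξ' - u)) ^ 2 / (4 * α) : ℝ) : ℂ)
              + ((2 * π * (u - ξ) * t + 0 : ℝ) : ℂ) * Complex.I) from by push_cast; ring,
            ← mul_assoc]
        simp_rw [hre]
        rw [integral_const_mul,
          gauss_step hα (2 * π * (u - ξ)) (-(2 * π * (ξ' - u)) ^ 2 / (4 * α)) 0]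
    _ = (Real.sqrt (Real.pi / (2 * α)) : ℂ) *
        Real.exp (-Real.pi ^ 2 * (ξ - ξ') ^ 2 / (2 * α)) *
      ∫ u : ℝ, 𝒦 ((ξ + ξ') / 2 - u) *
        (Real.sqrt (2 * Real.pi / α) * Real.exp (-2 * Real.pi ^ 2 * u ^ 2 / α)) := by
        have hsub : (∫ u : ℝ, 𝒦 ((ξ + ξ') / 2 - u) *
            ((Real.sqrt (2 * π / α) : ℂ) * (Real.exp (-2 * π ^ 2 * u ^ 2 / α) : ℂ)))
            = ∫ u : ℝ, 𝒦 u * ((Real.sqrt (2 * π / α) : ℂ) *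
              (Real.exp (-2 * π ^ 2 * ((ξ + ξ') / 2 - u) ^ 2 / α) : ℂ)) := by
          rw [← integral_comp_sub_left' (fun v : ℝ => 𝒦 v * ((Real.sqrt (2 * π / α) : ℂ) *
              (Real.exp (-2 * π ^ 2 * ((ξ + ξ') / 2 - v) ^ 2 / α) : ℂ))) ((ξ + ξ') / 2)]
          refine integral_congr_ae (Filter.Eventually.of_forall fun u => ?_)
          beta_reduce
          congr 4
          ring
        rw [hsub, ← integral_const_mul]
        refine integral_congr_ae (Filter.Eventually.of_forall fun u => ?_)
        beta_reduce
        have hexp : -(2 * π * (u - ξ)) ^ 2 / (4 * α) + -(2 * π * (ξ' - u)) ^ 2 / (4 * α)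
            = -π ^ 2 * (ξ - ξ') ^ 2 / (2 * α) + -2 * π ^ 2 * ((ξ + ξ') / 2 - u) ^ 2 / α := by
          field_simp
          ring
        have h1 : Real.sqrt (π / α) * Real.sqrt (π / α) = π / α :=
          Real.mul_self_sqrt (by positivity)
        have h2 : Real.sqrt (π / (2 * α)) * Real.sqrt (2 * π / α) = π / α := by
          rw [← Real.sqrt_mul (by positivity),
            show π / (2 * α) * (2 * π / α) = (π / α) ^ 2 by field_simp]
          exact Real.sqrt_sq (by positivity)
        have hre : Real.sqrt (π / α) * Real.sqrt (π / α) *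
            Real.exp (-(2 * π * (u - ξ)) ^ 2 / (4 * α) + -(2 * π * (ξ' - u)) ^ 2 / (4 * α))
            = (Real.sqrt (π / (2 * α)) * Real.exp (-π ^ 2 * (ξ - ξ') ^ 2 / (2 * α))) *
              (Real.sqrt (2 * π / α) * Real.exp (-2 * π ^ 2 * ((ξ + ξ') / 2 - u) ^ 2 / α)) := by
          rw [h1, hexp, Real.exp_add, ← h2]
          ring
        have hreC : ((Real.sqrt (π / α) : ℝ) : ℂ) * ((Real.sqrt (π / α) : ℝ) : ℂ) *
            ((Real.exp (-(2 * π * (u - ξ)) ^ 2 / (4 * α)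
              + -(2 * π * (ξ' - u)) ^ 2 / (4 * α)) : ℝ) : ℂ)
            = (((Real.sqrt (π / (2 * α)) : ℝ) : ℂ) *
                ((Real.exp (-π ^ 2 * (ξ - ξ') ^ 2 / (2 * α)) : ℝ) : ℂ)) *
              (((Real.sqrt (2 * π / α) : ℝ) : ℂ) *
                ((Real.exp (-2 * π ^ 2 * ((ξ + ξ') / 2 - u) ^ 2 / α) : ℝ) : ℂ)) := by
          exact_mod_cast congrArg (fun x : ℝ => (x : ℂ)) hre
        have hzero : (((0 : ℝ) : ℂ)) * Complex.I = 0 := by simp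
        rw [hzero, add_zero, ← Complex.ofReal_exp]
        linear_combination 𝒦 u * hreC
end

section
/- Let Q ∈ ℕ, and for q = 1,…,Q let σ_q > 0, γ_q > 0, θ_q ∈ ℝ; define the spectral mixture kernel K(τ) = Σ_{q=1}^Q σ_q² e^{−γ_q τ²} cos(2π θ_q τ), and let α > 0. Then for all ξ, ξ' ∈ ℝ, ∬_{ℝ×ℝ} K(t−t') e^{−α t²} e^{−α t'²} e^{−2πi(ξ t − ξ' t')} dt dt' = Σ_{q=1}^Q Σ_{θ ∈ {θ_q, −θ_q}} (σ_q² π)/(2 √(α(α+2γ_q))) · e^{−π²(ξ−ξ')²/(2α)} · e^{−2π²((ξ+ξ')/2 − θ)²/(α+2γ_q)}. -/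
open MeasureTheory

noncomputable def KE (a g w u v t t' : ℝ) : ℂ :=
  -(g:ℂ)*((t:ℂ)-(t':ℂ))^2 + Complex.I*(w:ℂ)*((t:ℂ)-(t':ℂ)) - (a:ℂ)*(t:ℂ)^2 - (a:ℂ)*(t':ℂ)^2
    - Complex.I*((u:ℂ)*(t:ℂ) - (v:ℂ)*(t':ℂ))

lemma gauss_integrable (r : ℝ) (hr : 0 < r) (c d : ℂ) :
    Integrable fun x : ℝ ↦ Complex.exp (-(r:ℂ) * x ^ 2 + c * x + d) :=
  integrable_cexp_quadratic' (by simpa using hr) c d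

lemma gauss_integral (r : ℝ) (hr : 0 < r) (c d : ℂ) :
    ∫ x : ℝ, Complex.exp (-(r:ℂ) * x ^ 2 + c * x + d)
      = (Real.sqrt (Real.pi / r) : ℂ) * Complex.exp (d + c ^ 2 / (4 * (r:ℂ))) := by
  have hb : ((-(r:ℂ))).re < 0 := by simpa using hr
  rw [integral_cexp_quadratic hb c d]
  congr 1
  · rw [neg_neg,
      show ((Real.pi : ℂ) / (r:ℂ)) = ((Real.pi / r : ℝ) : ℂ) by push_cast; ring,
      show (1/2 : ℂ) = ((1/2 : ℝ) : ℂ) by norm_num,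
      ← Complex.ofReal_cpow (by positivity), ← Real.sqrt_eq_rpow]
  · congr 1
    have : (r:ℂ) ≠ 0 := Complex.ofReal_ne_zero.2 hr.ne'
    field_simp
    ring

lemma key (a g w u v : ℝ) (ha : 0 < a) (hg : 0 < g) :
    (∀ t : ℝ, Integrable fun t' : ℝ ↦ Complex.exp (KE a g w u v t t')) ∧
    (Integrable fun t : ℝ ↦ ∫ t' : ℝ, Complex.exp (KE a g w u v t t')) ∧
    ((∫ t : ℝ, ∫ t' : ℝ, Complex.exp (KE a g w u v t t'))
      = (Real.sqrt (Real.pi^2/(a*(a+2*g))) : ℂ) *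
        Complex.exp (((-(u-v)^2/(8*a) - ((u+v)/2-w)^2/(2*(a+2*g)) : ℝ)) : ℂ)) := by
  have hag : 0 < a + g := by linarith
  have hag' : a + g ≠ 0 := hag.ne'
  have ha2g : (0:ℝ) < a + 2*g := by linarith
  set r2 : ℝ := a*(a+2*g)/(a+g) with hr2def
  have hr2 : 0 < r2 := by positivity
  set M : ℝ := (a*w - (a+g)*u + g*v)/(a+g) with hMdef
  set d2 : ℝ := -(v-w)^2/(4*(a+g)) with hd2def
  have hE1 : ∀ t t' : ℝ, KE a g w u v t t'
      = -(((a+g : ℝ)):ℂ) * (t':ℂ)^2 + (((2*g*t : ℝ):ℂ) + Complex.I*(((v - w : ℝ)):ℂ)) * (t':ℂ)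
        + (-(((a+g : ℝ)):ℂ)*(t:ℂ)^2 + Complex.I*(((w - u : ℝ)):ℂ)*(t:ℂ)) := by
    intro t t'; unfold KE; push_cast; ring
  have hE2 : ∀ t : ℝ,
      (-(((a+g : ℝ)):ℂ)*(t:ℂ)^2 + Complex.I*(((w - u : ℝ)):ℂ)*(t:ℂ))
        + (((2*g*t : ℝ):ℂ) + Complex.I*(((v - w : ℝ)):ℂ)) ^ 2 / (4 * ((a+g : ℝ):ℂ))
      = -((r2:ℝ):ℂ) * (t:ℂ)^2 + (Complex.I*((M:ℝ):ℂ)) * (t:ℂ) + ((d2:ℝ):ℂ) := by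
    intro t
    have h : (a:ℂ) + (g:ℂ) ≠ 0 := by
      have := Complex.ofReal_ne_zero.2 hag'; push_cast at this; exact this
    have sq_id : ∀ x y : ℂ, (x + Complex.I*y)^2 = x^2 + 2*x*y*Complex.I - y^2 := by
      intro x y; linear_combination y^2 * Complex.I_sq
    rw [hr2def, hMdef, hd2def, sq_id]
    push_cast
    field_simp
    ring
  have h1 : ∀ t : ℝ, (∫ t' : ℝ, Complex.exp (KE a g w u v t t'))
      = (Real.sqrt (Real.pi/(a+g)) : ℂ) *
        Complex.exp (-((r2:ℝ):ℂ) * (t:ℂ)^2 + (Complex.I*((M:ℝ):ℂ)) * (t:ℂ) + ((d2:ℝ):ℂ)) := by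
    intro t
    simp_rw [hE1 t]
    rw [gauss_integral (a+g) hag _ _, hE2 t]
  refine ⟨fun t => ?_, ?_, ?_⟩
  · simp_rw [hE1 t]; exact gauss_integrable (a+g) hag _ _
  · simp_rw [h1]
    exact (gauss_integrable r2 hr2 _ _).const_mul _
  · simp_rw [h1]
    rw [integral_const_mul, gauss_integral r2 hr2 _ _]
    rw [show ((d2:ℝ):ℂ) + (Complex.I*((M:ℝ):ℂ))^2/(4*(r2:ℂ))
        = ((d2 - M^2/(4*r2) : ℝ) : ℂ) by
      rw [mul_pow, Complex.I_sq]; push_cast; ring]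
    rw [show (d2 - M^2/(4*r2) : ℝ)
        = -(u-v)^2/(8*a) - ((u+v)/2-w)^2/(2*(a+2*g)) by
      rw [hd2def, hMdef, hr2def]; field_simp; ring]
    rw [← mul_assoc, ← Complex.ofReal_mul, ← Real.sqrt_mul (by positivity),
      show Real.pi/(a+g) * (Real.pi/r2) = Real.pi^2/(a*(a+2*g)) by
        rw [hr2def]; field_simp]

lemma point (s g th a x x' t t' : ℝ) :
    ((s * Real.exp (-g * (t - t') ^ 2) * Real.cos (2 * Real.pi * th * (t - t')) : ℝ) : ℂ) *
      (Real.exp (-a * t ^ 2) : ℝ) * (Real.exp (-a * t' ^ 2) : ℝ) *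
      Complex.exp (-2 * Real.pi * Complex.I * (x * t - x' * t'))
    = ((s:ℂ)/2) * Complex.exp (KE a g (2*Real.pi*th) (2*Real.pi*x) (2*Real.pi*x') t t')
      + ((s:ℂ)/2) * Complex.exp (KE a g (-(2*Real.pi*th)) (2*Real.pi*x) (2*Real.pi*x') t t') := by
  have hplus : KE a g (2*Real.pi*th) (2*Real.pi*x) (2*Real.pi*x') t t'
      = ((-g*(t-t')^2 : ℝ) : ℂ) + ((2*Real.pi*th*(t-t') : ℝ):ℂ)*Complex.I
        + ((-a*t^2 : ℝ):ℂ) + ((-a*t'^2 : ℝ):ℂ)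
        + (-2 * Real.pi * Complex.I * ((x:ℂ) * (t:ℂ) - (x':ℂ) * (t':ℂ))) := by
    unfold KE; push_cast; ring
  have hminus : KE a g (-(2*Real.pi*th)) (2*Real.pi*x) (2*Real.pi*x') t t'
      = ((-g*(t-t')^2 : ℝ) : ℂ) + (-(((2*Real.pi*th*(t-t') : ℝ):ℂ)))*Complex.I
        + ((-a*t^2 : ℝ):ℂ) + ((-a*t'^2 : ℝ):ℂ)
        + (-2 * Real.pi * Complex.I * ((x:ℂ) * (t:ℂ) - (x':ℂ) * (t':ℂ))) := by
    unfold KE; push_cast; ring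
  rw [hplus, hminus]
  simp only [Complex.exp_add]
  rw [Complex.ofReal_mul, Complex.ofReal_mul, Complex.ofReal_cos,
    Complex.ofReal_exp, Complex.ofReal_exp, Complex.ofReal_exp, Complex.cos]
  ring

/-- Closed form of the local-spectrum covariance `K_F(ξ,ξ')` for the spectral
mixture kernel `K(τ) = Σ_q σ_q² e^{−γ_q τ²} cos(2πθ_q τ)`: a sum, over the
components `q` and over `θ ∈ {θ_q, −θ_q}`, of Gaussian factors in `ξ−ξ'` and in
the mid-frequency `(ξ+ξ')/2 − θ`. -/
theorem local_spectrum_covariance_sm_kernel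
    (Q : ℕ) (σ γ θ : Fin Q → ℝ)
    (hσ : ∀ q, 0 < σ q) (hγ : ∀ q, 0 < γ q)
    (α : ℝ) (hα : 0 < α) (ξ ξ' : ℝ) :
    (∫ t : ℝ, ∫ t' : ℝ,
        ((∑ q, σ q ^ 2 * Real.exp (-γ q * (t - t') ^ 2) *
            Real.cos (2 * Real.pi * θ q * (t - t')) : ℝ) : ℂ) *
        Real.exp (-α * t ^ 2) * Real.exp (-α * t' ^ 2) *
        Complex.exp (-2 * Real.pi * Complex.I * (ξ * t - ξ' * t')))
    = ∑ q, ((((σ q ^ 2 * Real.pi) / (2 * Real.sqrt (α * (α + 2 * γ q))) *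
          Real.exp (-Real.pi ^ 2 * (ξ - ξ') ^ 2 / (2 * α)) *
          Real.exp (-2 * Real.pi ^ 2 * ((ξ + ξ') / 2 - θ q) ^ 2 / (α + 2 * γ q)) : ℝ) : ℂ) +
        (((σ q ^ 2 * Real.pi) / (2 * Real.sqrt (α * (α + 2 * γ q))) *
          Real.exp (-Real.pi ^ 2 * (ξ - ξ') ^ 2 / (2 * α)) *
          Real.exp (-2 * Real.pi ^ 2 * ((ξ + ξ') / 2 - (-θ q)) ^ 2 / (α + 2 * γ q)) : ℝ) : ℂ)) := by
  have hk := fun q : Fin Q =>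
    key α (γ q) (2*Real.pi*θ q) (2*Real.pi*ξ) (2*Real.pi*ξ') hα (hγ q)
  have hkm := fun q : Fin Q =>
    key α (γ q) (-(2*Real.pi*θ q)) (2*Real.pi*ξ) (2*Real.pi*ξ') hα (hγ q)
  have hpt : ∀ t t' : ℝ,
      ((∑ q, σ q ^ 2 * Real.exp (-γ q * (t - t') ^ 2) *
            Real.cos (2 * Real.pi * θ q * (t - t')) : ℝ) : ℂ) *
        Real.exp (-α * t ^ 2) * Real.exp (-α * t' ^ 2) *
        Complex.exp (-2 * Real.pi * Complex.I * (ξ * t - ξ' * t'))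
      = ∑ q, ((((σ q ^ 2 : ℝ)):ℂ)/2 * Complex.exp (KE α (γ q) (2*Real.pi*θ q) (2*Real.pi*ξ) (2*Real.pi*ξ') t t')
          + (((σ q ^ 2 : ℝ)):ℂ)/2 * Complex.exp (KE α (γ q) (-(2*Real.pi*θ q)) (2*Real.pi*ξ) (2*Real.pi*ξ') t t')) := by
    intro t t'
    rw [Complex.ofReal_sum, Finset.sum_mul, Finset.sum_mul, Finset.sum_mul]
    exact Finset.sum_congr rfl fun q _ => point (σ q ^ 2) (γ q) (θ q) α ξ ξ' t t'
  simp_rw [hpt]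
  have h2 : ∀ t : ℝ, (∫ t' : ℝ, ∑ q, ((((σ q ^ 2 : ℝ)):ℂ)/2 * Complex.exp (KE α (γ q) (2*Real.pi*θ q) (2*Real.pi*ξ) (2*Real.pi*ξ') t t')
          + (((σ q ^ 2 : ℝ)):ℂ)/2 * Complex.exp (KE α (γ q) (-(2*Real.pi*θ q)) (2*Real.pi*ξ) (2*Real.pi*ξ') t t')))
      = ∑ q, (((((σ q ^ 2 : ℝ)):ℂ)/2 * ∫ t' : ℝ, Complex.exp (KE α (γ q) (2*Real.pi*θ q) (2*Real.pi*ξ) (2*Real.pi*ξ') t t'))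
          + ((((σ q ^ 2 : ℝ)):ℂ)/2 * ∫ t' : ℝ, Complex.exp (KE α (γ q) (-(2*Real.pi*θ q)) (2*Real.pi*ξ) (2*Real.pi*ξ') t t'))) := by
    intro t
    refine (integral_finset_sum (μ := volume) Finset.univ
      (f := fun (q : Fin Q) (t' : ℝ) =>
        (((σ q ^ 2 : ℝ)):ℂ)/2 * Complex.exp (KE α (γ q) (2*Real.pi*θ q) (2*Real.pi*ξ) (2*Real.pi*ξ') t t')
          + (((σ q ^ 2 : ℝ)):ℂ)/2 * Complex.exp (KE α (γ q) (-(2*Real.pi*θ q)) (2*Real.pi*ξ) (2*Real.pi*ξ') t t'))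
      (fun q _ => (((hk q).1 t).const_mul _).add (((hkm q).1 t).const_mul _))).trans ?_
    exact Finset.sum_congr rfl fun q _ => by
      rw [integral_add (((hk q).1 t).const_mul _) (((hkm q).1 t).const_mul _),
        integral_const_mul, integral_const_mul]
  simp_rw [h2]
  refine Eq.trans (integral_finset_sum (μ := volume) Finset.univ
    (f := fun (q : Fin Q) (t : ℝ) =>
      (((σ q ^ 2 : ℝ)):ℂ)/2 * (∫ t' : ℝ, Complex.exp (KE α (γ q) (2*Real.pi*θ q) (2*Real.pi*ξ) (2*Real.pi*ξ') t t'))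
        + (((σ q ^ 2 : ℝ)):ℂ)/2 * (∫ t' : ℝ, Complex.exp (KE α (γ q) (-(2*Real.pi*θ q)) (2*Real.pi*ξ) (2*Real.pi*ξ') t t')))
    (fun q _ => ((hk q).2.1.const_mul _).add ((hkm q).2.1.const_mul _))) ?_
  refine Finset.sum_congr rfl fun q _ => ?_
  rw [integral_add ((hk q).2.1.const_mul _) ((hkm q).2.1.const_mul _),
    integral_const_mul, integral_const_mul, (hk q).2.2, (hkm q).2.2]
  have hA : (0:ℝ) < α * (α + 2 * γ q) := by nlinarith [hγ q]
  have hsq : Real.sqrt (Real.pi^2/(α*(α+2*γ q))) = Real.pi / Real.sqrt (α*(α+2*γ q)) := by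
    rw [Real.sqrt_div (by positivity), Real.sqrt_sq Real.pi_pos.le]
  congr 1
  · rw [show (-(2*Real.pi*ξ-2*Real.pi*ξ')^2/(8*α)
        - ((2*Real.pi*ξ+2*Real.pi*ξ')/2-(2*Real.pi*θ q))^2/(2*(α+2*γ q)) : ℝ)
        = (-Real.pi ^ 2 * (ξ - ξ') ^ 2 / (2 * α))
          + (-2 * Real.pi ^ 2 * ((ξ + ξ') / 2 - θ q) ^ 2 / (α + 2 * γ q)) by
      have h1 : α ≠ 0 := hα.ne'
      have h2 : α + 2 * γ q ≠ 0 := by nlinarith [hγ q]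
      field_simp
      ring]
    rw [hsq, Complex.ofReal_add, Complex.exp_add]
    push_cast
    ring
  · rw [show (-(2*Real.pi*ξ-2*Real.pi*ξ')^2/(8*α)
        - ((2*Real.pi*ξ+2*Real.pi*ξ')/2-(-(2*Real.pi*θ q)))^2/(2*(α+2*γ q)) : ℝ)
        = (-Real.pi ^ 2 * (ξ - ξ') ^ 2 / (2 * α))
          + (-2 * Real.pi ^ 2 * ((ξ + ξ') / 2 - (-θ q)) ^ 2 / (α + 2 * γ q)) by
      have h1 : α ≠ 0 := hα.ne'
      have h2 : α + 2 * γ q ≠ 0 := by nlinarith [hγ q]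
      field_simp
      ring]
    rw [hsq, Complex.ofReal_add, Complex.exp_add]
    push_cast
    ring
end

section
/- Let σ > 0, γ > 0, θ₀ ∈ ℝ, α > 0, and define K(τ) = σ² e^{−γ τ²} cos(2π θ₀ τ). Then for all t, ξ ∈ ℝ, ∫_ℝ K(t − s) e^{−α s²} e^{−2πiξs} ds = Σ_{θ ∈ {θ₀, −θ₀}} (σ²/2) √(π/(α+γ)) · e^{−αγ t²/(α+γ)} · e^{−π²(ξ+θ)²/(α+γ)} · e^{2πi t (θα − γξ)/(α+γ)}. -/
open MeasureTheory

private lemma key_integral (γ α : ℝ) (hγ : 0 < γ) (hα : 0 < α) (t ξ θ : ℝ) :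
    (∫ s : ℝ, Complex.exp ((-(α + γ) : ℂ) * s ^ 2
        + ((2 * γ * t : ℝ) - 2 * Real.pi * Complex.I * (θ + ξ)) * s
        + ((-γ * t ^ 2 : ℝ) + 2 * Real.pi * Complex.I * θ * t)))
    = (Real.sqrt (Real.pi / (α + γ)) : ℂ)
        * Real.exp (-α * γ * t ^ 2 / (α + γ))
        * Real.exp (-Real.pi ^ 2 * (ξ + θ) ^ 2 / (α + γ))
        * Complex.exp (2 * Real.pi * Complex.I * t * ((θ * α - γ * ξ) / (α + γ))) := by
  have hpos : (0:ℝ) < α + γ := by linarith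
  have hne : (α + γ : ℂ) ≠ 0 := by exact_mod_cast ne_of_gt hpos
  have hb : (-(α + γ) : ℂ).re < 0 := by simp; linarith
  rw [integral_cexp_quadratic hb]
  have h1 : ((Real.pi : ℂ) / -(-(α + γ) : ℂ)) ^ (1/2 : ℂ)
      = (Real.sqrt (Real.pi / (α + γ)) : ℂ) := by
    rw [neg_neg]
    have h2 : ((Real.pi : ℂ) / ((α:ℂ) + γ)) = ((Real.pi / (α + γ) : ℝ) : ℂ) := by
      push_cast; ring
    rw [h2, show (1/2 : ℂ) = ((1/2 : ℝ) : ℂ) by norm_num,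
      ← Complex.ofReal_cpow (by positivity) (1/2 : ℝ)]
    norm_num [Real.sqrt_eq_rpow]
  rw [h1, Complex.ofReal_exp, Complex.ofReal_exp,
    mul_assoc ((Real.sqrt (Real.pi / (α + γ)) : ℝ) : ℂ),
    mul_assoc ((Real.sqrt (Real.pi / (α + γ)) : ℝ) : ℂ),
    ← Complex.exp_add, ← Complex.exp_add]
  congr 1
  congr 1
  rw [show (4 * -((α:ℂ) + γ)) = -(4 * ((α:ℂ) + γ)) by ring, div_neg, sub_neg_eq_add]
  push_cast
  field_simp [hne]
  ring_nf
  simp only [Complex.I_sq]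
  ring

/-- Closed form of the cross-covariance `K_{yF}(t,ξ) = ∫ K(t−s) e^{−αs²} e^{−2πiξs} ds`
for a single spectral-mixture component `K(τ) = σ² e^{−γτ²} cos(2πθ₀τ)`:
a sum over `θ ∈ {θ₀, −θ₀}` of Gaussian-modulated complex exponentials. -/
theorem cross_covariance_sm_component
    (σ γ θ₀ α : ℝ) (hσ : 0 < σ) (hγ : 0 < γ) (hα : 0 < α) (t ξ : ℝ) :
    (∫ s : ℝ, ((σ ^ 2 * Real.exp (-γ * (t - s) ^ 2) *
          Real.cos (2 * Real.pi * θ₀ * (t - s)) : ℝ) : ℂ) *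
        Real.exp (-α * s ^ 2) *
        Complex.exp (-2 * Real.pi * Complex.I * ξ * s))
    = (((σ ^ 2 / 2 * Real.sqrt (Real.pi / (α + γ)) *
          Real.exp (-α * γ * t ^ 2 / (α + γ)) *
          Real.exp (-Real.pi ^ 2 * (ξ + θ₀) ^ 2 / (α + γ)) : ℝ) : ℂ) *
        Complex.exp (2 * Real.pi * Complex.I * t * ((θ₀ * α - γ * ξ) / (α + γ))) +
       ((σ ^ 2 / 2 * Real.sqrt (Real.pi / (α + γ)) *
          Real.exp (-α * γ * t ^ 2 / (α + γ)) *
          Real.exp (-Real.pi ^ 2 * (ξ + (-θ₀)) ^ 2 / (α + γ)) : ℝ) : ℂ) *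
        Complex.exp (2 * Real.pi * Complex.I * t * (((-θ₀) * α - γ * ξ) / (α + γ)))) := by
  have hb : (-(α + γ) : ℂ).re < 0 := by simp; linarith
  set Q : ℝ → ℝ → ℂ := fun θ s => (-(α + γ) : ℂ) * s ^ 2
      + (((2 * γ * t : ℝ) : ℂ) - 2 * Real.pi * Complex.I * (θ + ξ)) * s
      + (((-γ * t ^ 2 : ℝ) : ℂ) + 2 * Real.pi * Complex.I * θ * t) with hQ
  have hint : ∀ θ : ℝ, Integrable (fun s : ℝ => Complex.exp (Q θ s)) :=
    fun θ => integrable_cexp_quadratic' hb _ _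
  have hptwise : ∀ s : ℝ,
      (((σ ^ 2 * Real.exp (-γ * (t - s) ^ 2) *
          Real.cos (2 * Real.pi * θ₀ * (t - s)) : ℝ) : ℂ) *
        Real.exp (-α * s ^ 2) *
        Complex.exp (-2 * Real.pi * Complex.I * ξ * s))
      = (σ ^ 2 / 2 : ℂ) * (Complex.exp (Q θ₀ s) + Complex.exp (Q (-θ₀) s)) := by
    intro s
    have h1 : Complex.exp (Q θ₀ s)
        = (Real.exp (-γ * (t - s) ^ 2) : ℂ) * (Real.exp (-α * s ^ 2) : ℂ)
          * Complex.exp (((2 * Real.pi * θ₀ * (t - s) : ℝ) : ℂ) * Complex.I)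
          * Complex.exp (-2 * Real.pi * Complex.I * ξ * s) := by
      rw [Complex.ofReal_exp, Complex.ofReal_exp, ← Complex.exp_add, ← Complex.exp_add,
        ← Complex.exp_add]
      congr 1
      simp only [hQ]
      push_cast
      ring
    have h2 : Complex.exp (Q (-θ₀) s)
        = (Real.exp (-γ * (t - s) ^ 2) : ℂ) * (Real.exp (-α * s ^ 2) : ℂ)
          * Complex.exp (-(((2 * Real.pi * θ₀ * (t - s) : ℝ) : ℂ)) * Complex.I)
          * Complex.exp (-2 * Real.pi * Complex.I * ξ * s) := by
      rw [Complex.ofReal_exp, Complex.ofReal_exp, ← Complex.exp_add, ← Complex.exp_add,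
        ← Complex.exp_add]
      congr 1
      simp only [hQ]
      push_cast
      ring
    rw [h1, h2]
    rw [Complex.ofReal_mul, Complex.ofReal_mul, Complex.ofReal_cos, Complex.cos]
    push_cast
    ring
  rw [MeasureTheory.integral_congr_ae (Filter.Eventually.of_forall hptwise),
    MeasureTheory.integral_const_mul,
    MeasureTheory.integral_add (hint θ₀) (hint (-θ₀)),
    key_integral γ α hγ hα t ξ θ₀, key_integral γ α hγ hα t ξ (-θ₀)]
  push_cast
  ring
end

section
/- Let N ∈ ℕ, t₁,…,t_N ∈ ℝ, y₁,…,y_N ∈ ℝ, and ξ ∈ ℝ. Then, as α → 0⁺, Σ_{i=1}^N y_i ∫_ℝ e^{−2πi(ξ−u) t_i} √(π/α) e^{−π² u²/α} du converges to the discrete-time Fourier transform Σ_{i=1}^N y_i e^{−2πiξ t_i}. (Model consistency: with an uninformative prior K(𝐭,𝐭) = I and 𝒦 ≡ 1, the posterior mean of the local spectrum converges to the discrete-time Fourier transform of the observations as the window becomes infinitely wide.) -/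
open MeasureTheory Filter Complex

lemma key_s9 (τ : ℝ) (ξ : ℝ) {α : ℝ} (hα : 0 < α) :
    (∫ u : ℝ, Complex.exp (-2 * Real.pi * Complex.I * (ξ - u) * τ) *
        ((Real.sqrt (Real.pi / α) * Real.exp (-Real.pi ^ 2 * u ^ 2 / α) : ℝ) : ℂ)) =
    Complex.exp (-2 * Real.pi * Complex.I * ξ * τ) * Complex.exp (-(α : ℂ) * τ ^ 2) := by
  have hπ : Real.pi ≠ 0 := Real.pi_ne_zero
  have hα' : α ≠ 0 := ne_of_gt hα
  have hb : (0 : ℝ) < ((Real.pi ^ 2 / α : ℝ) : ℂ).re := by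
    rw [Complex.ofReal_re]; positivity
  have h := fourierIntegral_gaussian (b := ((Real.pi ^ 2 / α : ℝ) : ℂ)) hb (2 * Real.pi * τ)
  have hrw : ∀ u : ℝ,
      Complex.exp (-2 * Real.pi * Complex.I * (ξ - u) * τ) *
        ((Real.sqrt (Real.pi / α) * Real.exp (-Real.pi ^ 2 * u ^ 2 / α) : ℝ) : ℂ) =
      ((Real.sqrt (Real.pi / α) : ℝ) : ℂ) * Complex.exp (-2 * Real.pi * Complex.I * ξ * τ) *
        (Complex.exp (Complex.I * (2 * Real.pi * τ) * u) *
          Complex.exp (-((Real.pi ^ 2 / α : ℝ) : ℂ) * u ^ 2)) := by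
    intro u
    push_cast
    rw [mul_comm, mul_assoc, ← Complex.exp_add, mul_assoc, ← Complex.exp_add,
      mul_assoc ((Real.sqrt (Real.pi / α) : ℝ) : ℂ), ← Complex.exp_add]
    congr 2
    ring
  simp_rw [hrw]
  rw [MeasureTheory.integral_const_mul, h]
  have h1 : ((Real.pi : ℂ) / ((Real.pi ^ 2 / α : ℝ) : ℂ)) = ((α / Real.pi : ℝ) : ℂ) := by
    push_cast
    rw [div_div_eq_mul_div, sq, mul_div_assoc]
    rw [mul_div_assoc', mul_div_mul_left _ _ (show (Real.pi : ℂ) ≠ 0 by exact_mod_cast hπ)]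
  have h2 : (((α / Real.pi : ℝ) : ℂ)) ^ (1 / 2 : ℂ) = ((Real.sqrt (α / Real.pi) : ℝ) : ℂ) := by
    rw [show ((1/2 : ℂ)) = ((1/2 : ℝ) : ℂ) by norm_num,
      ← Complex.ofReal_cpow (by positivity), Real.sqrt_eq_rpow]
  have h3 : Real.sqrt (Real.pi / α) * Real.sqrt (α / Real.pi) = 1 := by
    rw [← Real.sqrt_mul (by positivity)]
    rw [show Real.pi / α * (α / Real.pi) = 1 by field_simp]
    exact Real.sqrt_one
  have h4 : -((2 : ℂ) * Real.pi * τ) ^ 2 / (4 * ((Real.pi ^ 2 / α : ℝ) : ℂ)) =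
      -(α : ℂ) * τ ^ 2 := by
    push_cast
    have : ((Real.pi : ℂ)) ≠ 0 := by exact_mod_cast hπ
    field_simp
    ring
  rw [h1, h2, h4]
  rw [show ((Real.sqrt (Real.pi / α) : ℝ) : ℂ) * Complex.exp (-2 * Real.pi * Complex.I * ξ * τ) *
      (((Real.sqrt (α / Real.pi) : ℝ) : ℂ) * Complex.exp (-(α : ℂ) * τ ^ 2)) =
      ((Real.sqrt (Real.pi / α) * Real.sqrt (α / Real.pi) : ℝ) : ℂ) *
        (Complex.exp (-2 * Real.pi * Complex.I * ξ * τ) * Complex.exp (-(α : ℂ) * τ ^ 2)) by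
    push_cast; ring]
  rw [h3]
  simp

/-- Model consistency: with an uninformative prior (`K(𝐭,𝐭) = I`, `𝒦 ≡ 1`), the
posterior mean of the local spectrum converges, as the window becomes infinitely
wide (`α → 0⁺`), to the discrete-time Fourier transform of the observations. -/
theorem posterior_mean_tendsto_dtft
    (N : ℕ) (t y : Fin N → ℝ) (ξ : ℝ) :
    Tendsto (fun α : ℝ => ∑ i, (y i : ℂ) *
        ∫ u : ℝ, Complex.exp (-2 * Real.pi * Complex.I * (ξ - u) * t i) *
          ((Real.sqrt (Real.pi / α) * Real.exp (-Real.pi ^ 2 * u ^ 2 / α) : ℝ) : ℂ))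
      (nhdsWithin 0 (Set.Ioi 0))
      (nhds (∑ i, (y i : ℂ) * Complex.exp (-2 * Real.pi * Complex.I * ξ * t i))) := by
  have hc : Continuous (fun α : ℝ => ∑ i, (y i : ℂ) *
      (Complex.exp (-2 * Real.pi * Complex.I * ξ * t i) *
        Complex.exp (-(α : ℂ) * (t i) ^ 2))) := by fun_prop
  have h0 := (hc.tendsto 0).mono_left (nhdsWithin_le_nhds (s := Set.Ioi (0:ℝ)))
  simp only [Complex.ofReal_zero, neg_zero, zero_mul, Complex.exp_zero, mul_one] at h0
  refine h0.congr' ?_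
  filter_upwards [self_mem_nhdsWithin] with α (hα : 0 < α)
  exact Finset.sum_congr rfl fun i _ => by rw [key_s9 (t i) ξ hα]
end
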